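/- Let κ ≠ 0, m > 0, r₁, r₂ > 0 with 1 − κr₁² ≠ 0 and 1 − κr₂² ≠ 0, set M = m·r₂/r₁, and let ρ ∈ ℝ. Then m(r₁ + r₂ − κρ²r₁/2)/(r₁(1 − κr₁²)) = M(r₁ + r₂ − κρ²r₂/2)/(r₂(1 − κr₂²)) if and only if (r₁ − r₂)·(ρ²(1 + κr₁r₂)/2 − (r₁ + r₂)²) = 0. -/

import Mathlib

/-- Equivalence between the compatibility condition (46) of the paper and its
factored form (48), given `M r₁ = m r₂`. -/
theorem compatibility_factorization (κ m r₁ r₂ ρ M : ℝ)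
    (hκ : κ ≠ 0) (hm : 0 < m) (hr₁ : 0 < r₁) (hr₂ : 0 < r₂)
    (h₁ : 1 - κ * r₁ ^ 2 ≠ 0) (h₂ : 1 - κ * r₂ ^ 2 ≠ 0)
    (hM : M = m * r₂ / r₁) :
    m * (r₁ + r₂ - κ * ρ ^ 2 * r₁ / 2) / (r₁ * (1 - κ * r₁ ^ 2))
        = M * (r₁ + r₂ - κ * ρ ^ 2 * r₂ / 2) / (r₂ * (1 - κ * r₂ ^ 2))
      ↔ (r₁ - r₂) * (ρ ^ 2 * (1 + κ * r₁ * r₂) / 2 - (r₁ + r₂) ^ 2) = 0 := by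
  subst hM
  have hden : r₁ * (1 - κ * r₁ ^ 2) * (1 - κ * r₂ ^ 2) ≠ 0 :=
    mul_ne_zero (mul_ne_zero hr₁.ne' h₁) h₂
  have hkm : -(κ * m) ≠ 0 := neg_ne_zero.mpr (mul_ne_zero hκ hm.ne')
  have key : m * (r₁ + r₂ - κ * ρ ^ 2 * r₁ / 2) / (r₁ * (1 - κ * r₁ ^ 2))
      - m * r₂ / r₁ * (r₁ + r₂ - κ * ρ ^ 2 * r₂ / 2) / (r₂ * (1 - κ * r₂ ^ 2))
      = -(κ * m) * ((r₁ - r₂) * (ρ ^ 2 * (1 + κ * r₁ * r₂) / 2 - (r₁ + r₂) ^ 2))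
        / (r₁ * (1 - κ * r₁ ^ 2) * (1 - κ * r₂ ^ 2)) := by
    rw [div_sub_div _ _ (mul_ne_zero hr₁.ne' h₁) (mul_ne_zero hr₂.ne' h₂), div_eq_div_iff (mul_ne_zero (mul_ne_zero hr₁.ne' h₁) (mul_ne_zero hr₂.ne' h₂)) hden]
    field_simp
    ring
  rw [← sub_eq_zero, key, div_eq_zero_iff, mul_eq_zero]
  simp [hden, hkm]
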